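/- A distribution D ⊆ Q^n(q^s) consisting of q^k points is an optimum [ns,k]_s-distribution (i.e., every elementary box Δ^M_A ∈ E_s(q,n) of volume q^{-k} contains exactly one point of D) if and only if its code C⟨D⟩ ⊆ Mat_{n,s}(F_q) is an MDS code in the metric ρ, i.e., ρ(C⟨D⟩) = ns - k + 1. -/

import Mathlib

set_option linter.unusedSectionVars false
set_option linter.unusedVariables false

/-- Rosenbloom–Tsfasman weight of a row vector. -/
def rhoRow {F : Type*} [Zero F] [DecidableEq F] {s : ℕ} (ω : Fin s → F) : ℕ :=
  (Finset.univ.filter fun j => ω j ≠ 0).sup fun j => j.1 + 1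

/-- Rosenbloom–Tsfasman weight of a matrix: the sum of the ρ-weights of its rows. -/
def rhoMat {F : Type*} [Zero F] [DecidableEq F] {n s : ℕ}
    (Ω : Matrix (Fin n) (Fin s) F) : ℕ :=
  ∑ i, rhoRow (Ω i)

/-- The minimum ρ-distance between distinct code words of a code. -/
noncomputable def rhoCode {F : Type*} [Field F] [DecidableEq F] {n s : ℕ}
    (C : Finset (Matrix (Fin n) (Fin s) F)) : ℕ :=
  sInf {d | ∃ Ω ∈ C, ∃ Ω' ∈ C, Ω ≠ Ω' ∧ rhoMat (Ω - Ω') = d}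

/-- The point of `[0,1)^n` whose `j`-th coordinate has `q`-ary digits
`ξ_i(x_j) = φ (Ω j i)`, i.e. `x_j = Σ_{i=1}^s ξ_i(x_j) q^{i-s-1}`. -/
noncomputable def coordOf {q : ℕ} {F : Type*} (φ : F ≃ Fin q) {n s : ℕ}
    (Ω : Matrix (Fin n) (Fin s) F) (j : Fin n) : ℝ :=
  ∑ i : Fin s, ((φ (Ω j i) : ℕ) : ℝ) * (q : ℝ) ^ ((i : ℤ) + 1 - s - 1)

namespace OptAux

lemma sum_digits_lt {q : ℕ} (hq : 0 < q) {a : ℕ} (e : ℕ → ℕ) (he : ∀ i, i < a → e i < q) :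
    ∑ i ∈ Finset.range a, e i * q ^ i < q ^ a := by
  induction a with
  | zero => simpa using hq
  | succ a ih =>
    rw [Finset.sum_range_succ]
    have h1 : ∑ i ∈ Finset.range a, e i * q ^ i < q ^ a :=
      ih (fun i hi => he i (by omega))
    calc ∑ i ∈ Finset.range a, e i * q ^ i + e a * q ^ a
        < q ^ a + e a * q ^ a := by omega
      _ = (1 + e a) * q ^ a := by ring
      _ ≤ q * q ^ a := Nat.mul_le_mul_right _ (by have := he a (by omega); omega)
      _ = q ^ (a + 1) := by ring

lemma sum_split (q : ℕ) {a s : ℕ} (has : a ≤ s) (e : ℕ → ℕ) :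
    ∑ i ∈ Finset.range s, e i * q ^ i
      = (∑ i ∈ Finset.range (s - a), e i * q ^ i)
        + q ^ (s - a) * ∑ t ∈ Finset.range a, e (s - a + t) * q ^ t := by
  conv_lhs => rw [show s = (s - a) + a by omega]
  rw [Finset.sum_range_add, Finset.mul_sum]
  congr 1
  refine Finset.sum_congr rfl fun t _ => ?_
  rw [pow_add]; ring

lemma div_high {q : ℕ} (hq : 0 < q) {a s : ℕ} (has : a ≤ s) (e : ℕ → ℕ)
    (he : ∀ i, i < s → e i < q) :
    (∑ i ∈ Finset.range s, e i * q ^ i) / q ^ (s - a)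
      = ∑ t ∈ Finset.range a, e (s - a + t) * q ^ t := by
  rw [sum_split q has e,
    Nat.add_mul_div_left _ _ (pow_pos hq (s - a)),
    Nat.div_eq_of_lt (sum_digits_lt hq e (fun i hi => he i (by omega))), Nat.zero_add]

lemma digits_unique {q : ℕ} : ∀ {a : ℕ} (e e' : ℕ → ℕ),
    (∀ i, i < a → e i < q) → (∀ i, i < a → e' i < q) →
    (∑ i ∈ Finset.range a, e i * q ^ i) = (∑ i ∈ Finset.range a, e' i * q ^ i) →
    ∀ i, i < a → e i = e' i := by
  intro a
  induction a with
  | zero => intro _ _ _ _ _ i hi; omega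
  | succ a ih =>
    intro e e' he he' hsum i hi
    have hq : 0 < q := by have := he 0 (by omega); omega
    rw [Finset.sum_range_succ, Finset.sum_range_succ] at hsum
    have hl : ∑ i ∈ Finset.range a, e i * q ^ i < q ^ a :=
      sum_digits_lt hq e (fun i hi => he i (by omega))
    have hl' : ∑ i ∈ Finset.range a, e' i * q ^ i < q ^ a :=
      sum_digits_lt hq e' (fun i hi => he' i (by omega))
    have htop : e a = e' a := by
      rcases Nat.lt_trichotomy (e a) (e' a) with h | h | h
      · exfalso
        have : e a * q ^ a + q ^ a ≤ e' a * q ^ a := by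
          calc e a * q ^ a + q ^ a = (e a + 1) * q ^ a := by ring
            _ ≤ e' a * q ^ a := Nat.mul_le_mul_right _ (by omega)
        omega
      · exact h
      · exfalso
        have : e' a * q ^ a + q ^ a ≤ e a * q ^ a := by
          calc e' a * q ^ a + q ^ a = (e' a + 1) * q ^ a := by ring
            _ ≤ e a * q ^ a := Nat.mul_le_mul_right _ (by omega)
        omega
    rcases Nat.lt_or_ge i a with h | h
    · exact ih e e' (fun i hi => he i (by omega)) (fun i hi => he' i (by omega))
        (by rw [htop] at hsum; omega) i h
    · have : i = a := by omega
      rw [this]; exact htop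

lemma nat_div_eq_iff {N p m : ℕ} (hp : 0 < p) : N / p = m ↔ m * p ≤ N ∧ N < (m + 1) * p := by
  constructor
  · rintro rfl
    refine ⟨Nat.div_mul_le_self _ _, ?_⟩
    have h1 := Nat.div_add_mod' N p
    have h2 := Nat.mod_lt N hp
    calc N = N / p * p + N % p := by omega
      _ < N / p * p + p := by omega
      _ = (N / p + 1) * p := by ring
  · rintro ⟨h1, h2⟩
    exact Nat.div_eq_of_lt_le h1 (by simpa [Nat.succ_mul] using h2)

lemma exists_le_sum {n : ℕ} (k : ℕ) : ∀ (d : ℕ) (c : Fin n → ℕ), (∑ j, c j) = k + d →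
    ∃ A : Fin n → ℕ, (∀ j, A j ≤ c j) ∧ ∑ j, A j = k := by
  intro d
  induction d with
  | zero => intro c hc; exact ⟨c, fun j => le_refl _, by omega⟩
  | succ d ih =>
    intro c hc
    have hj : ∃ j, 0 < c j := by
      by_contra h
      push_neg at h
      have : ∑ j, c j = 0 := Finset.sum_eq_zero (fun j _ => by have := h j; omega)
      omega
    obtain ⟨j0, hj0⟩ := hj
    obtain ⟨A, hA1, hA2⟩ := ih (Function.update c j0 (c j0 - 1)) (by
      rw [Finset.sum_update_of_mem (Finset.mem_univ _), ← Finset.erase_eq]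
      have h5 : ∑ j ∈ Finset.univ.erase j0, c j + c j0 = ∑ j, c j :=
        Finset.sum_erase_add Finset.univ c (Finset.mem_univ j0)
      omega)
    refine ⟨A, fun j => ?_, hA2⟩
    by_cases h : j = j0
    · subst h
      have h6 := hA1 j
      rw [Function.update_self] at h6
      omega
    · have h6 := hA1 j
      rwa [Function.update_of_ne h] at h6

section Mat

variable {q : ℕ} {F : Type*} [Field F] [Fintype F] [DecidableEq F] {n s : ℕ}

/-- the `q`-ary digits of row `j` of `Ω`, as a function on `ℕ`. -/
def digitsM (φ : F ≃ Fin q) (Ω : Matrix (Fin n) (Fin s) F) (j : Fin n) : ℕ → ℕ :=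
  fun i => if h : i < s then ((φ (Ω j ⟨i, h⟩)) : ℕ) else 0

/-- the numerator of the `j`-th coordinate of the point of `Ω`. -/
def NsM (φ : F ≃ Fin q) (Ω : Matrix (Fin n) (Fin s) F) (j : Fin n) : ℕ :=
  ∑ i ∈ Finset.range s, digitsM φ Ω j i * q ^ i

lemma digitsM_lt (hq : 0 < q) (φ : F ≃ Fin q) (Ω : Matrix (Fin n) (Fin s) F) (j : Fin n)
    (i : ℕ) : digitsM φ Ω j i < q := by
  unfold digitsM
  split
  · exact (φ _).isLt
  · exact hq

lemma coordOf_eq (hq : 0 < q) (φ : F ≃ Fin q) (Ω : Matrix (Fin n) (Fin s) F) (j : Fin n) :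
    coordOf φ Ω j = (NsM φ Ω j : ℝ) / (q : ℝ) ^ s := by
  have hq0 : (q : ℝ) ≠ 0 := Nat.cast_ne_zero.mpr (by omega)
  unfold coordOf NsM
  push_cast
  rw [Finset.sum_div, ← Fin.sum_univ_eq_sum_range
    (fun i => ((digitsM φ Ω j i : ℕ) : ℝ) * (q : ℝ) ^ i / (q : ℝ) ^ s) s]
  refine Finset.sum_congr rfl fun i _ => ?_
  have hz : (q : ℝ) ^ ((i : ℤ) + 1 - (s : ℤ) - 1) = (q : ℝ) ^ (i : ℕ) / (q : ℝ) ^ (s : ℕ) := by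
    rw [show (i : ℤ) + 1 - (s : ℤ) - 1 = ((i : ℕ) : ℤ) - ((s : ℕ) : ℤ) by push_cast; ring,
      zpow_sub₀ hq0, zpow_natCast, zpow_natCast]
  rw [hz]
  unfold digitsM
  rw [dif_pos i.isLt]
  rw [Fin.eta]
  ring

lemma box_iff (hq : 1 < q) (φ : F ≃ Fin q) {a m : ℕ} (has : a ≤ s) (hm : m < q ^ a)
    (Ω : Matrix (Fin n) (Fin s) F) (j : Fin n) :
    ((m : ℝ) / (q : ℝ) ^ a ≤ coordOf φ Ω j ∧ coordOf φ Ω j < ((m : ℝ) + 1) / (q : ℝ) ^ a) ↔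
      NsM φ Ω j / q ^ (s - a) = m := by
  have hq0 : (0 : ℝ) < (q : ℝ) := Nat.cast_pos.mpr (by omega)
  have hpa : (0 : ℝ) < (q : ℝ) ^ a := pow_pos hq0 a
  have hps : (0 : ℝ) < (q : ℝ) ^ s := pow_pos hq0 s
  have hpsa : (0 : ℝ) < (q : ℝ) ^ (s - a) := pow_pos hq0 (s - a)
  rw [coordOf_eq (by omega) φ Ω j, nat_div_eq_iff (pow_pos (by omega : 0 < q) (s - a))]
  have hsplit : (q : ℝ) ^ s = (q : ℝ) ^ (s - a) * (q : ℝ) ^ a := by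
    rw [← pow_add]; congr 1; omega
  have e1 : ((m : ℝ) / (q : ℝ) ^ a ≤ (NsM φ Ω j : ℝ) / (q : ℝ) ^ s) ↔
      ((m : ℝ) * (q : ℝ) ^ (s - a) ≤ (NsM φ Ω j : ℝ)) := by
    rw [div_le_div_iff₀ hpa hps, hsplit, ← mul_assoc, mul_le_mul_iff_of_pos_right hpa]
  have e2 : ((NsM φ Ω j : ℝ) / (q : ℝ) ^ s < ((m : ℝ) + 1) / (q : ℝ) ^ a) ↔
      ((NsM φ Ω j : ℝ) < ((m : ℝ) + 1) * (q : ℝ) ^ (s - a)) := by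
    rw [div_lt_div_iff₀ hps hpa, hsplit, ← mul_assoc, mul_lt_mul_iff_of_pos_right hpa]
  rw [e1, e2]
  constructor
  · rintro ⟨h1, h2⟩
    exact ⟨by exact_mod_cast h1, by exact_mod_cast h2⟩
  · rintro ⟨h1, h2⟩
    exact ⟨by exact_mod_cast h1, by exact_mod_cast h2⟩

lemma NsM_div_lt (hq : 0 < q) (φ : F ≃ Fin q) {a : ℕ} (has : a ≤ s)
    (Ω : Matrix (Fin n) (Fin s) F) (j : Fin n) :
    NsM φ Ω j / q ^ (s - a) < q ^ a := by
  rw [NsM, div_high hq has _ (fun i _ => digitsM_lt hq φ Ω j i)]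
  exact sum_digits_lt hq _ (fun i _ => digitsM_lt hq φ Ω j _)

lemma agree_iff (hq : 0 < q) (φ : F ≃ Fin q) {a : ℕ} (has : a ≤ s)
    (Ω Ω' : Matrix (Fin n) (Fin s) F) (j : Fin n) :
    NsM φ Ω j / q ^ (s - a) = NsM φ Ω' j / q ^ (s - a) ↔
      ∀ i : Fin s, s - a ≤ (i : ℕ) → Ω j i = Ω' j i := by
  rw [NsM, NsM, div_high hq has _ (fun i _ => digitsM_lt hq φ Ω j i),
    div_high hq has _ (fun i _ => digitsM_lt hq φ Ω' j i)]
  constructor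
  · intro h i hi
    have hd := digits_unique (fun t => digitsM φ Ω j (s - a + t))
      (fun t => digitsM φ Ω' j (s - a + t))
      (fun t _ => digitsM_lt hq φ Ω j _) (fun t _ => digitsM_lt hq φ Ω' j _)
      h ((i : ℕ) - (s - a)) (by omega)
    have hidx : s - a + ((i : ℕ) - (s - a)) = (i : ℕ) := by omega
    rw [hidx] at hd
    unfold digitsM at hd
    rw [dif_pos i.isLt, dif_pos i.isLt] at hd
    have h1 : φ (Ω j ⟨(i : ℕ), i.isLt⟩) = φ (Ω' j ⟨(i : ℕ), i.isLt⟩) := Fin.val_injective hd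
    have h2 := φ.injective h1
    simpa using h2
  · intro h
    refine Finset.sum_congr rfl fun t ht => ?_
    rw [Finset.mem_range] at ht
    congr 1
    have hlt : s - a + t < s := by omega
    unfold digitsM
    rw [dif_pos hlt, dif_pos hlt]
    exact congrArg (fun x => (φ x : ℕ)) (h ⟨s - a + t, hlt⟩ (by simp))

lemma rhoRow_le_iff {ω : Fin s → F} {c : ℕ} :
    rhoRow ω ≤ c ↔ ∀ i : Fin s, c ≤ (i : ℕ) → ω i = 0 := by
  unfold rhoRow
  rw [Finset.sup_le_iff]
  constructor
  · intro h i hi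
    by_contra hne
    have := h i (Finset.mem_filter.mpr ⟨Finset.mem_univ _, hne⟩)
    omega
  · intro h i hi
    rw [Finset.mem_filter] at hi
    by_contra hc
    exact hi.2 (h i (by omega))

lemma rhoRow_le_s (ω : Fin s → F) : rhoRow ω ≤ s :=
  Finset.sup_le fun i _ => i.isLt

end Mat

end OptAux

open OptAux in
theorem optimum_iff_MDS {q n s k : ℕ} (F : Type*) [Field F] [Fintype F] [DecidableEq F]
    (hq : Fintype.card F = q) (φ : F ≃ Fin q) (hφ : (φ 0 : ℕ) = 0)
    (hk : 1 ≤ k) (hkn : k ≤ n * s)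
    (D : Finset (Matrix (Fin n) (Fin s) F)) (hcard : D.card = q ^ k) :
    (∀ A m : Fin n → ℕ, (∀ j, A j ≤ s) → (∑ j, A j) = k →
        (∀ j, m j < q ^ (A j)) →
        (D.filter fun Ω => ∀ j, (m j : ℝ) / (q : ℝ) ^ (A j) ≤ coordOf φ Ω j ∧
            coordOf φ Ω j < ((m j : ℝ) + 1) / (q : ℝ) ^ (A j)).card = 1) ↔
      rhoCode D = n * s - k + 1 := by
  classical
  have hq2 : 1 < q := by rw [← hq]; exact Fintype.one_lt_card
  have hq0 : 0 < q := by omega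
  -- the projection of a matrix onto its "top `A j` digits"
  set f : (Fin n → ℕ) → Matrix (Fin n) (Fin s) F → (Fin n → ℕ) :=
    fun A Ω j => NsM φ Ω j / q ^ (s - A j) with hf
  set S : Set ℕ := {d | ∃ Ω ∈ D, ∃ Ω' ∈ D, Ω ≠ Ω' ∧ rhoMat (Ω - Ω') = d} with hS
  have hrc : rhoCode D = sInf S := rfl
  have hsum_s : (∑ _j : Fin n, s) = n * s := by
    simp [Finset.sum_const, mul_comm]
  have hflt : ∀ (A : Fin n → ℕ) Ω (j : Fin n), A j ≤ s → f A Ω j < q ^ (A j) :=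
    fun A Ω j hA => NsM_div_lt hq0 φ hA Ω j
  have hfilter : ∀ (A m : Fin n → ℕ), (∀ j, A j ≤ s) → (∀ j, m j < q ^ (A j)) → ∀ Ω,
      ((∀ j, (m j : ℝ) / (q : ℝ) ^ (A j) ≤ coordOf φ Ω j ∧
          coordOf φ Ω j < ((m j : ℝ) + 1) / (q : ℝ) ^ (A j)) ↔ f A Ω = m) := by
    intro A m hA hm Ω
    rw [funext_iff]
    exact forall_congr' fun j => box_iff hq2 φ (hA j) (hm j) Ω j
  have hagree : ∀ (A : Fin n → ℕ), (∀ j, A j ≤ s) → ∀ Ω Ω',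
      (f A Ω = f A Ω' ↔ ∀ (j : Fin n) (i : Fin s), s - A j ≤ (i : ℕ) → Ω j i = Ω' j i) := by
    intro A hA Ω Ω'
    rw [funext_iff]
    exact forall_congr' fun j => agree_iff hq0 φ (hA j) Ω Ω' j
  have hrho1 : ∀ (Ω Ω' : Matrix (Fin n) (Fin s) F) (A : Fin n → ℕ), (∀ j, A j ≤ s) →
      (∀ (j : Fin n) (i : Fin s), s - A j ≤ (i : ℕ) → Ω j i = Ω' j i) →
      rhoMat (Ω - Ω') ≤ n * s - ∑ j, A j := by
    intro Ω Ω' A hA h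
    have hrow : ∀ j, rhoRow ((Ω - Ω') j) ≤ s - A j := by
      intro j
      rw [rhoRow_le_iff]
      intro i hi
      have := h j i hi
      simp [Matrix.sub_apply, sub_eq_zero, this]
    have h1 : rhoMat (Ω - Ω') ≤ ∑ j, (s - A j) := Finset.sum_le_sum fun j _ => hrow j
    have h2 : (∑ j, (s - A j)) + ∑ j, A j = ∑ _j : Fin n, s := by
      rw [← Finset.sum_add_distrib]
      exact Finset.sum_congr rfl fun j _ => by have := hA j; omega
    omega
  have hrho2 : ∀ Ω Ω' : Matrix (Fin n) (Fin s) F, rhoMat (Ω - Ω') ≤ n * s - k →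
      ∃ A : Fin n → ℕ, (∀ j, A j ≤ s) ∧ (∑ j, A j = k) ∧
        ∀ (j : Fin n) (i : Fin s), s - A j ≤ (i : ℕ) → Ω j i = Ω' j i := by
    intro Ω Ω' hle
    have hrow_le : ∀ j, rhoRow ((Ω - Ω') j) ≤ s := fun j => rhoRow_le_s _
    have hsum2 : (∑ j, (s - rhoRow ((Ω - Ω') j))) + rhoMat (Ω - Ω') = ∑ _j : Fin n, s := by
      rw [rhoMat, ← Finset.sum_add_distrib]
      exact Finset.sum_congr rfl fun j _ => by have := hrow_le j; omega
    have hc : k ≤ ∑ j, (s - rhoRow ((Ω - Ω') j)) := by omega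
    obtain ⟨A, hA1, hA2⟩ := exists_le_sum k ((∑ j, (s - rhoRow ((Ω - Ω') j))) - k)
      (fun j => s - rhoRow ((Ω - Ω') j)) (by
        show (∑ j, (s - rhoRow ((Ω - Ω') j)))
          = k + ((∑ j, (s - rhoRow ((Ω - Ω') j))) - k)
        omega)
    refine ⟨A, fun j => le_trans (hA1 j) (Nat.sub_le _ _), hA2, fun j i hi => ?_⟩
    have h3 : rhoRow ((Ω - Ω') j) ≤ s - A j := by
      have h7 : A j ≤ s - rhoRow ((Ω - Ω') j) := hA1 j
      have := hrow_le j; omega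
    have h0 := rhoRow_le_iff.mp h3 i hi
    have h0' : Ω j i - Ω' j i = 0 := by simpa [Matrix.sub_apply] using h0
    rwa [sub_eq_zero] at h0'
  have hcardT : ∀ A : Fin n → ℕ,
      (Fintype.piFinset fun j => Finset.range (q ^ A j)).card = q ^ (∑ j, A j) := by
    intro A
    rw [Fintype.card_piFinset]
    simp only [Finset.card_range]
    rw [Finset.prod_pow_eq_pow_sum]
  constructor
  · -- optimum distribution → MDS
    intro hbox
    have LB : ∀ d ∈ S, n * s - k + 1 ≤ d := by
      rintro d ⟨Ω, hΩ, Ω', hΩ', hne, rfl⟩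
      by_contra hlt
      push_neg at hlt
      obtain ⟨A, hA1, hA2, hA3⟩ := hrho2 Ω Ω' (by omega)
      have hm : ∀ j, f A Ω j < q ^ (A j) := fun j => hflt A Ω j (hA1 j)
      have h1 := hbox A (f A Ω) hA1 hA2 hm
      have hΩmem : Ω ∈ D.filter fun Ω' => ∀ j, ((f A Ω) j : ℝ) / (q : ℝ) ^ (A j) ≤ coordOf φ Ω' j ∧
          coordOf φ Ω' j < (((f A Ω) j : ℝ) + 1) / (q : ℝ) ^ (A j) :=
        Finset.mem_filter.mpr ⟨hΩ, (hfilter A (f A Ω) hA1 hm Ω).mpr rfl⟩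
      have hΩ'mem : Ω' ∈ D.filter fun Ω'' => ∀ j, ((f A Ω) j : ℝ) / (q : ℝ) ^ (A j) ≤ coordOf φ Ω'' j ∧
          coordOf φ Ω'' j < (((f A Ω) j : ℝ) + 1) / (q : ℝ) ^ (A j) :=
        Finset.mem_filter.mpr ⟨hΩ', (hfilter A (f A Ω) hA1 hm Ω').mpr
          ((hagree A hA1 Ω' Ω).mpr (fun j i hi => (hA3 j i hi).symm))⟩
      have h2 : 1 < (D.filter fun Ω'' => ∀ j, ((f A Ω) j : ℝ) / (q : ℝ) ^ (A j) ≤ coordOf φ Ω'' j ∧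
          coordOf φ Ω'' j < (((f A Ω) j : ℝ) + 1) / (q : ℝ) ^ (A j)).card :=
        Finset.one_lt_card.mpr ⟨Ω, hΩmem, Ω', hΩ'mem, hne⟩
      omega
    have hmem : (n * s - k + 1) ∈ S := by
      obtain ⟨A, hA1, hA2⟩ := exists_le_sum (k - 1) (n * s - (k - 1)) (fun _ => s)
        (by rw [hsum_s]; omega)
      have hlt : (Fintype.piFinset fun j => Finset.range (q ^ A j)).card < D.card := by
        rw [hcardT A, hA2, hcard]
        exact Nat.pow_lt_pow_right hq2 (by omega)
      obtain ⟨Ω, hΩ, Ω', hΩ', hne, hfe⟩ :=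
        Finset.exists_ne_map_eq_of_card_lt_of_maps_to (f := f A) hlt (fun Ω _ => by
          rw [Finset.mem_coe, Fintype.mem_piFinset]
          intro j
          rw [Finset.mem_range]
          exact hflt A Ω j (hA1 j))
      have hd : rhoMat (Ω - Ω') ≤ n * s - (k - 1) := by
        have h4 := hrho1 Ω Ω' A hA1 ((hagree A hA1 Ω Ω').mp hfe)
        rw [hA2] at h4
        exact h4
      have hdS : rhoMat (Ω - Ω') ∈ S := ⟨Ω, hΩ, Ω', hΩ', hne, rfl⟩
      have h5 := LB _ hdS
      have heq : rhoMat (Ω - Ω') = n * s - k + 1 := by omega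
      exact heq ▸ hdS
    have h1 : sInf S ≤ n * s - k + 1 := Nat.sInf_le hmem
    have h2 : n * s - k + 1 ≤ sInf S := LB _ (Nat.sInf_mem ⟨_, hmem⟩)
    rw [hrc]
    omega
  · -- MDS → optimum distribution
    intro hmds A m hA1 hA2 hm
    rw [hrc] at hmds
    have hInj : ∀ Ω ∈ D, ∀ Ω' ∈ D, f A Ω = f A Ω' → Ω = Ω' := by
      intro Ω hΩ Ω' hΩ' hfe
      by_contra hne
      have h1 : rhoMat (Ω - Ω') ≤ n * s - k := by
        have h4 := hrho1 Ω Ω' A hA1 ((hagree A hA1 Ω Ω').mp hfe)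
        rw [hA2] at h4
        exact h4
      have h2 : rhoMat (Ω - Ω') ∈ S := ⟨Ω, hΩ, Ω', hΩ', hne, rfl⟩
      have h3 : sInf S ≤ rhoMat (Ω - Ω') := Nat.sInf_le h2
      omega
    have himage : Finset.image (f A) D = Fintype.piFinset fun j => Finset.range (q ^ A j) := by
      apply Finset.eq_of_subset_of_card_le
      · intro x hx
        rw [Finset.mem_image] at hx
        obtain ⟨Ω, hΩ, rfl⟩ := hx
        rw [Fintype.mem_piFinset]
        intro j
        rw [Finset.mem_range]
        exact hflt A Ω j (hA1 j)
      · rw [hcardT A, hA2, Finset.card_image_of_injOn (fun Ω hΩ Ω' hΩ' => hInj Ω hΩ Ω' hΩ'),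
          hcard]
    have hm_mem : m ∈ Fintype.piFinset fun j => Finset.range (q ^ A j) := by
      rw [Fintype.mem_piFinset]
      intro j
      rw [Finset.mem_range]
      exact hm j
    rw [← himage, Finset.mem_image] at hm_mem
    obtain ⟨Ω0, hΩ0, hfΩ0⟩ := hm_mem
    have hsingle : (D.filter fun Ω => ∀ j, (m j : ℝ) / (q : ℝ) ^ (A j) ≤ coordOf φ Ω j ∧
        coordOf φ Ω j < ((m j : ℝ) + 1) / (q : ℝ) ^ (A j)) = {Ω0} := by
      ext Ω
      rw [Finset.mem_filter, Finset.mem_singleton]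
      constructor
      · rintro ⟨hΩ, hP⟩
        exact hInj Ω hΩ Ω0 hΩ0 (((hfilter A m hA1 hm Ω).mp hP).trans hfΩ0.symm)
      · rintro rfl
        exact ⟨hΩ0, (hfilter A m hA1 hm _).mpr hfΩ0⟩
    rw [hsingle, Finset.card_singleton]
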